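/- Let V be a finite-dimensional complex vector space, L a symmetric 2n-multilinear form on V, q a symmetric bilinear form on V, and C a complex constant such that L(x, ..., x) = C · q(x,x)^n for all x in V. If h ∈ V satisfies q(h,h) = 0, then for every integer k with n < k ≤ 2n and every a ∈ V, the polarized value L(a, ..., a, h, ..., h) (with a appearing 2n−k times and h appearing k times) equals 0. -/

import Mathlib

open Finset Polynomial

-- auxiliary: symmetric multilinear map depends only on multiset/card of piecewise
lemma aux_card_subtype_lt {N c : ℕ} (hc : c ≤ N) :
    Fintype.card {i : Fin N // (i : ℕ) < c} = c := by
  have e : {i : Fin N // (i : ℕ) < c} ≃ Fin c :=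
    { toFun := fun i => ⟨i.1, i.2⟩
      invFun := fun j => ⟨⟨j.1, lt_of_lt_of_le j.2 hc⟩, j.2⟩
      left_inv := fun i => rfl
      right_inv := fun j => rfl }
  simp [Fintype.card_congr e]

lemma aux_perm {N : ℕ} {V : Type*} (a h : V) (s : Finset (Fin N)) (c : ℕ) (hc : c ≤ N)
    (hcard : s.card = N - c) :
    ∃ σ : Equiv.Perm (Fin N),
      (s.piecewise (fun _ => h) (fun _ => a)) ∘ σ =
        fun i : Fin N => if (i : ℕ) < c then a else h := by
  classical
  set P : Fin N → Prop := fun i => ¬ ((i : ℕ) < c) with hP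
  set Q : Fin N → Prop := fun i => i ∈ s with hQ
  have hcP : Fintype.card {i // P i} = N - c := by
    have h1 : Fintype.card {i : Fin N // (i : ℕ) < c} = c := aux_card_subtype_lt hc
    have := Fintype.card_subtype_compl (fun i : Fin N => (i : ℕ) < c)
    simp only [h1, Fintype.card_fin] at this
    simpa [hP] using this
  have hcQ : Fintype.card {i // Q i} = N - c := by
    simpa [hQ, Fintype.card_coe] using hcard
  have hcP' : Fintype.card {i // ¬ P i} = c := by
    have := Fintype.card_subtype_compl P
    rw [hcP, Fintype.card_fin] at this
    omega
  have hcQ' : Fintype.card {i // ¬ Q i} = c := by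
    have := Fintype.card_subtype_compl Q
    rw [hcQ, Fintype.card_fin] at this
    omega
  have eP : {i // P i} ≃ {i // Q i} := Fintype.equivOfCardEq (by rw [hcP, hcQ])
  have eN : {i // ¬ P i} ≃ {i // ¬ Q i} := Fintype.equivOfCardEq (by rw [hcP', hcQ'])
  refine ⟨(Equiv.sumCompl P).symm.trans ((eP.sumCongr eN).trans (Equiv.sumCompl Q)), ?_⟩
  funext i
  by_cases hi : P i
  · simp only [Function.comp_apply, Equiv.trans_apply]
    rw [Equiv.sumCompl_symm_apply_of_pos hi]
    rw [Equiv.sumCongr_apply, Sum.map_inl, Equiv.sumCompl_apply_inl]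
    have hm : (eP ⟨i, hi⟩ : Fin N) ∈ s := (eP ⟨i, hi⟩).2
    rw [Finset.piecewise_eq_of_mem _ _ _ hm, if_neg hi]
  · simp only [Function.comp_apply, Equiv.trans_apply]
    rw [Equiv.sumCompl_symm_apply_of_neg hi]
    rw [Equiv.sumCongr_apply, Sum.map_inr, Equiv.sumCompl_apply_inr]
    have hm : ¬ ((eN ⟨i, hi⟩ : Fin N) ∈ s) := (eN ⟨i, hi⟩).2
    rw [Finset.piecewise_eq_of_notMem _ _ _ hm, if_pos (not_not.mp hi)]



/-- Fujiki-type relation; if q(h,h)=0 then all polarized values of L with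
more than n copies of h vanish. -/
theorem stmt0 {V : Type*} [AddCommGroup V] [Module ℂ V] [FiniteDimensional ℂ V]
    (n : ℕ) (hn : 1 ≤ n)
    (L : MultilinearMap ℂ (fun _ : Fin (2*n) => V) ℂ)
    (hLsymm : ∀ (σ : Equiv.Perm (Fin (2*n))) (v : Fin (2*n) → V), L (v ∘ σ) = L v)
    (q : V →ₗ[ℂ] V →ₗ[ℂ] ℂ) (hqsymm : ∀ x y, q x y = q y x)
    (C : ℂ) (hFujiki : ∀ x : V, L (fun _ => x) = C * (q x x)^n)
    (h : V) (hh : q h h = 0) :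
    ∀ k : ℕ, n < k → k ≤ 2*n → ∀ a : V,
      L (fun i => if (i : ℕ) < 2*n - k then a else h) = 0 := by
  classical
  intro k hk1 hk2 a
  set F : ℕ → ℂ := fun m => L (fun i => if (i : ℕ) < 2*n - m then a else h) with hF
  have key : ∀ s : Finset (Fin (2*n)),
      L (s.piecewise (fun _ => h) (fun _ => a)) = F s.card := by
    intro s
    have hsc : s.card ≤ 2*n := by
      simpa using Finset.card_le_card (Finset.subset_univ s)
    obtain ⟨σ, hσ⟩ := aux_perm a h s (2*n - s.card) (by omega) (by omega)
    rw [← hLsymm σ, hσ, hF]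
  have expand : ∀ lam : ℂ,
      (∑ m ∈ Finset.range (2*n+1), ((2*n).choose m : ℂ) * (lam^m * F m))
        = C * (q a a + 2*lam*(q a h))^n := by
    intro lam
    have h1 : L (fun _ => a + lam • h) = C * (q (a+lam•h) (a+lam•h))^n := hFujiki _
    have h2 : q (a+lam•h) (a+lam•h) = q a a + 2*lam*(q a h) := by
      simp only [map_add, map_smul, LinearMap.add_apply, LinearMap.smul_apply,
        smul_eq_mul, hh, hqsymm h a]
      ring
    rw [h2] at h1
    rw [← h1]
    have h3 : (fun _ : Fin (2*n) => a + lam • h)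
        = (fun _ => lam • h) + (fun _ => a) := by
      funext i; simp [add_comm]
    rw [h3, L.map_add_univ]
    have h4 : ∀ s : Finset (Fin (2*n)),
        L (s.piecewise (fun _ => lam•h) (fun _ => a)) = lam^s.card * F s.card := by
      intro s
      have heq : s.piecewise (fun _ => lam•h) (fun _ => a)
           = s.piecewise (fun i => lam • (s.piecewise (fun _ => h) (fun _ => a)) i)
               (s.piecewise (fun _ => h) (fun _ => a)) := by
        funext i
        by_cases hi : i ∈ s <;>
          simp [Finset.piecewise_eq_of_mem, Finset.piecewise_eq_of_notMem, hi]
      rw [heq, L.map_piecewise_smul, key s]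
      simp [smul_eq_mul]
    have h5 : ∑ s : Finset (Fin (2*n)), L (s.piecewise (fun _ => lam•h) (fun _ => a))
        = ∑ m ∈ Finset.range (2*n+1), ((2*n).choose m : ℂ) * (lam^m * F m) := by
      rw [← Finset.powerset_univ, Finset.sum_powerset]
      simp only [Finset.card_univ, Fintype.card_fin]
      refine Finset.sum_congr rfl fun j hj => ?_
      have := Finset.sum_powersetCard j (Finset.univ : Finset (Fin (2*n)))
        (fun m => lam^m * F m)
      rw [Finset.sum_congr rfl (fun t _ => h4 t), this]
      simp [nsmul_eq_mul, Finset.card_univ]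
    rw [h5]
  -- polynomial comparison
  set p : Polynomial ℂ :=
    ∑ m ∈ Finset.range (2*n+1), Polynomial.C (((2*n).choose m : ℂ) * F m) * Polynomial.X^m
    with hp
  set r : Polynomial ℂ :=
    Polynomial.C C * (Polynomial.C (q a a) + Polynomial.C (2*(q a h)) * Polynomial.X)^n
    with hr
  have hpr : p = r := by
    apply Polynomial.funext
    intro lam
    rw [hp, hr]
    rw [Polynomial.eval_finset_sum]
    simp only [Polynomial.eval_mul, Polynomial.eval_C, Polynomial.eval_pow,
      Polynomial.eval_X, Polynomial.eval_add]
    have := expand lam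
    calc ∑ m ∈ Finset.range (2*n+1), ((2*n).choose m : ℂ) * F m * lam ^ m
        = ∑ m ∈ Finset.range (2*n+1), ((2*n).choose m : ℂ) * (lam^m * F m) := by
          refine Finset.sum_congr rfl fun m _ => by ring
      _ = C * (q a a + 2*lam*(q a h))^n := expand lam
      _ = C * (q a a + 2*(q a h) * lam)^n := by ring
  have hdeg : r.natDegree ≤ n := by
    have hb : (Polynomial.C (q a a) + Polynomial.C (2*(q a h)) * Polynomial.X).natDegree ≤ 1 := by
      refine le_trans (Polynomial.natDegree_add_le _ _) ?_
      simp only [Polynomial.natDegree_C, max_le_iff]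
      exact ⟨Nat.zero_le _, le_trans (Polynomial.natDegree_C_mul_le _ _) (by simp)⟩
    calc r.natDegree ≤ ((Polynomial.C (q a a) + Polynomial.C (2*(q a h)) * Polynomial.X)^n).natDegree :=
          Polynomial.natDegree_C_mul_le _ _
      _ ≤ n * (Polynomial.C (q a a) + Polynomial.C (2*(q a h)) * Polynomial.X).natDegree :=
          Polynomial.natDegree_pow_le
      _ ≤ n * 1 := Nat.mul_le_mul_left _ hb
      _ = n := by ring
  have hcoeff : p.coeff k = ((2*n).choose k : ℂ) * F k := by
    rw [hp, Polynomial.finset_sum_coeff]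
    simp only [Polynomial.coeff_C_mul, Polynomial.coeff_X_pow, mul_ite, mul_one, mul_zero]
    rw [Finset.sum_ite_eq]
    simp [Finset.mem_range, Nat.lt_succ_of_le hk2]
  have hzero : p.coeff k = 0 := by
    rw [hpr]
    exact Polynomial.coeff_eq_zero_of_natDegree_lt (lt_of_le_of_lt hdeg hk1)
  rw [hcoeff] at hzero
  have hchoose : ((2*n).choose k : ℂ) ≠ 0 := by
    exact_mod_cast Nat.cast_ne_zero.mpr (Nat.choose_pos hk2).ne'
  exact (mul_eq_zero.mp hzero).resolve_left hchoose
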